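/- arXiv:2502.19842 — 2 statements merged into one kernel-verified Lean document; each statement's English description precedes it below -/
import Mathlib

section
/- Let b ≥ 1 and let {X_{k,i} : k ∈ {0, 1, …, b}, i ∈ ℕ} be a jointly independent family of identically distributed real-valued random variables with E = 0 and second moment 1. For d ∈ ℕ set z_k^{(d)} = (X_{k,0}, …, X_{k,d−1}) ∈ ℝ^d. Then the sequence of random variables d ↦ Σ_{k=1}^{b} exp(S(z_0^{(d)}, z_k^{(d)})) converges to b in probability as d → ∞, where S denotes cosine similarity with the zero-division convention. -/
open MeasureTheory ProbabilityTheory Filter Finset Topology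

/-- Cosine similarity of two vectors in Euclidean space, with the convention
that division by zero yields `0` (which is the Lean convention for `/`). -/
noncomputable def cosSim {n : ℕ} (u v : EuclideanSpace ℝ (Fin n)) : ℝ :=
  (inner ℝ u v : ℝ) / (‖u‖ * ‖v‖)

/-- The random vector `(X 0, …, X (d-1)) ∈ ℝᵈ` built from a sequence of
real random variables. -/
noncomputable def zvec {Ω : Type*} (X : ℕ → Ω → ℝ) (d : ℕ) (ω : Ω) :
    EuclideanSpace ℝ (Fin d) :=
  (WithLp.equiv 2 (Fin d → ℝ)).symm fun i => X i ω

/-- Explicit formula for the cosine similarity of two of our random vectors. -/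
lemma cosSim_zvec {Ω : Type*} (X Y : ℕ → Ω → ℝ) (d : ℕ) (ω : Ω) :
    cosSim (zvec X d ω) (zvec Y d ω) =
      (∑ i ∈ range d, X i ω * Y i ω) /
        (Real.sqrt (∑ i ∈ range d, (X i ω) ^ 2) *
          Real.sqrt (∑ i ∈ range d, (Y i ω) ^ 2)) := by
  simp only [cosSim, zvec]
  rw [PiLp.inner_apply, EuclideanSpace.norm_eq, EuclideanSpace.norm_eq]
  simp only [WithLp.equiv_symm_apply, WithLp.ofLp_toLp, RCLike.inner_apply', conj_trivial,
    Real.norm_eq_abs, sq_abs]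
  rw [Fin.sum_univ_eq_sum_range (fun i => X i ω * Y i ω),
    Fin.sum_univ_eq_sum_range (fun i => (X i ω) ^ 2),
    Fin.sum_univ_eq_sum_range (fun i => (Y i ω) ^ 2)]

/-- Two pairs of independent random variables with identically distributed components
are identically distributed as pairs. -/
lemma identDistrib_prod_of_indep {Ω : Type*} [MeasurableSpace Ω] {μ : Measure Ω}
    [IsFiniteMeasure μ] {X Y X' Y' : Ω → ℝ}
    (hX : Measurable X) (hY : Measurable Y) (hX' : Measurable X') (hY' : Measurable Y')
    (h : IndepFun X Y μ) (h' : IndepFun X' Y' μ)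
    (hXX : IdentDistrib X X' μ μ) (hYY : IdentDistrib Y Y' μ μ) :
    IdentDistrib (fun ω => (X ω, Y ω)) (fun ω => (X' ω, Y' ω)) μ μ := by
  refine ⟨(hX.prodMk hY).aemeasurable, (hX'.prodMk hY').aemeasurable, ?_⟩
  rw [(indepFun_iff_map_prod_eq_prod_map_map hX.aemeasurable hY.aemeasurable).1 h,
    (indepFun_iff_map_prod_eq_prod_map_map hX'.aemeasurable hY'.aemeasurable).1 h',
    hXX.map_eq, hYY.map_eq]

/-- **Denominator limit in the contrastive loss.**
Let `b ≥ 1` and let `{X k i : k ∈ {0,…,b}, i ∈ ℕ}` be a jointly independent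
family of identically distributed real random variables with mean `0` and
second moment `1`.  With `z_k⁽ᵈ⁾ = (X k 0, …, X k (d-1)) ∈ ℝᵈ`, the sum
`∑_{k=1}^b exp(S(z_0⁽ᵈ⁾, z_k⁽ᵈ⁾))` converges to `b` in probability as
`d → ∞`, where `S` is cosine similarity with the zero-division convention. -/
theorem sum_exp_cosSim_negatives_tendsto_b_inProbability
    {Ω : Type*} {mΩ : MeasurableSpace Ω} (μ : Measure Ω) [IsProbabilityMeasure μ]
    (b : ℕ) (hb : 1 ≤ b)
    (X : Fin (b + 1) → ℕ → Ω → ℝ)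
    (hmeas : ∀ k i, Measurable (X k i))
    (hindep : iIndepFun (fun p : Fin (b + 1) × ℕ => X p.1 p.2) μ)
    (hident : ∀ k i, IdentDistrib (X k i) (X 0 0) μ μ)
    (hint : Integrable (fun ω => (X 0 0 ω) ^ 2) μ)
    (hmean : ∫ ω, X 0 0 ω ∂μ = 0)
    (hsecond : ∫ ω, (X 0 0 ω) ^ 2 ∂μ = 1) :
    TendstoInMeasure μ
      (fun (d : ℕ) ω =>
        ∑ k ∈ Finset.Ioi (0 : Fin (b + 1)),
          Real.exp (cosSim (zvec (X 0) d ω) (zvec (X k) d ω)))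
      atTop (fun _ => (b : ℝ)) := by
  have hsqm : Measurable fun x : ℝ => x ^ 2 := by fun_prop
  -- each X k i is integrable
  have hL2 : ∀ k i, Integrable (fun ω => (X k i ω) ^ 2) μ := fun k i =>
    (((hident k i).comp hsqm).integrable_iff).2 hint
  have hL1 : ∀ k i, Integrable (X k i) μ := fun k i =>
    ((memLp_two_iff_integrable_sq (hmeas k i).aestronglyMeasurable).2 (hL2 k i)).integrable
      one_le_two
  have hmean' : ∀ k i, ∫ ω, X k i ω ∂μ = 0 := fun k i => by
    rw [(hident k i).integral_eq, hmean]
  have hsq' : ∀ k i, ∫ ω, (X k i ω) ^ 2 ∂μ = 1 := fun k i => by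
    have h := ((hident k i).comp hsqm).integral_eq
    simp only [Function.comp_def] at h
    rw [h, hsecond]
  -- strong law for the squares
  have hsq : ∀ k : Fin (b + 1), ∀ᵐ ω ∂μ,
      Tendsto (fun d : ℕ => (∑ i ∈ range d, (X k i ω) ^ 2) / (d : ℝ)) atTop (𝓝 1) := by
    intro k
    have hpi : Pairwise (Function.onFun (IndepFun · · μ) fun i ω => (X k i ω) ^ 2) := by
      intro i j hij
      exact (hindep.indepFun (i := (k, i)) (j := (k, j)) (by simp [Prod.ext_iff, hij])).comp
        hsqm hsqm
    have hid : ∀ i, IdentDistrib (fun ω => (X k i ω) ^ 2) (fun ω => (X k 0 ω) ^ 2) μ μ :=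
      fun i => ((hident k i).comp hsqm).trans ((hident k 0).comp hsqm).symm
    have := strong_law_ae_real (fun i ω => (X k i ω) ^ 2) (hL2 k 0) hpi hid
    rw [hsq' k 0] at this
    exact this
  -- strong law for the products
  have hprod : ∀ k : Fin (b + 1), k ≠ 0 → ∀ᵐ ω ∂μ,
      Tendsto (fun d : ℕ => (∑ i ∈ range d, X 0 i ω * X k i ω) / (d : ℝ)) atTop (𝓝 0) := by
    intro k hk
    have hfm : ∀ p : Fin (b + 1) × ℕ, Measurable fun ω => X p.1 p.2 ω := fun p =>
      hmeas p.1 p.2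
    have hpairind : ∀ i, IndepFun (X 0 i) (X k i) μ := fun i =>
      hindep.indepFun (i := ((0 : Fin (b + 1)), i)) (j := (k, i))
        (by simp [Prod.ext_iff, Ne.symm hk])
    have hpi : Pairwise (Function.onFun (IndepFun · · μ) fun i ω => X 0 i ω * X k i ω) := by
      intro i j hij
      exact hindep.indepFun_mul_mul hfm ((0 : Fin (b + 1)), i) (k, i)
        ((0 : Fin (b + 1)), j) (k, j)
        (by simp [Prod.ext_iff, hij]) (by simp [Prod.ext_iff, hij, Ne.symm hk])
        (by simp [Prod.ext_iff, hij, hk]) (by simp [Prod.ext_iff, hij])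
    have hid : ∀ i, IdentDistrib (fun ω => X 0 i ω * X k i ω)
        (fun ω => X 0 0 ω * X k 0 ω) μ μ := fun i =>
      (identDistrib_prod_of_indep (hmeas 0 i) (hmeas k i) (hmeas 0 0) (hmeas k 0)
        (hpairind i) (hpairind 0) ((hident 0 i).trans (hident 0 0).symm)
        ((hident k i).trans (hident k 0).symm)).comp
        (measurable_fst.mul measurable_snd)
    have hintP : Integrable (fun ω => X 0 0 ω * X k 0 ω) μ :=
      (hpairind 0).integrable_mul (hL1 0 0) (hL1 k 0)
    have hmeanP : ∫ ω, X 0 0 ω * X k 0 ω ∂μ = 0 := by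
      have h : ∫ ω, X 0 0 ω * X k 0 ω ∂μ = (∫ ω, X 0 0 ω ∂μ) * ∫ ω, X k 0 ω ∂μ :=
        (hpairind 0).integral_fun_mul_eq_mul_integral (hL1 0 0).aestronglyMeasurable
          (hL1 k 0).aestronglyMeasurable
      rw [h, hmean' 0 0, hmean' k 0, mul_zero]
    have := strong_law_ae_real (fun i ω => X 0 i ω * X k i ω) hintP hpi hid
    rw [hmeanP] at this
    exact this
  -- combine a.e. statements
  have hsqall : ∀ᵐ ω ∂μ, ∀ k : Fin (b + 1),
      Tendsto (fun d : ℕ => (∑ i ∈ range d, (X k i ω) ^ 2) / (d : ℝ)) atTop (𝓝 1) :=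
    ae_all_iff.2 hsq
  have hprodall : ∀ᵐ ω ∂μ, ∀ k : {k : Fin (b + 1) // k ≠ 0},
      Tendsto (fun d : ℕ => (∑ i ∈ range d, X 0 i ω * X (k : Fin (b + 1)) i ω) / (d : ℝ))
        atTop (𝓝 0) :=
    ae_all_iff.2 fun k => hprod k k.2
  -- a.e. pointwise convergence of the sum
  have hae : ∀ᵐ ω ∂μ,
      Tendsto (fun d : ℕ =>
          ∑ k ∈ Finset.Ioi (0 : Fin (b + 1)),
            Real.exp (cosSim (zvec (X 0) d ω) (zvec (X k) d ω)))
        atTop (𝓝 (b : ℝ)) := by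
    filter_upwards [hsqall, hprodall] with ω hω1 hω2
    have hbcast : (b : ℝ) = ∑ _k ∈ Finset.Ioi (0 : Fin (b + 1)), (1 : ℝ) := by simp
    rw [hbcast]
    refine tendsto_finset_sum _ fun k hk => ?_
    have hk0 : k ≠ 0 := Fin.pos_iff_ne_zero.1 (Finset.mem_Ioi.1 hk)
    -- the cosine similarity tends to 0
    have hA := hω2 ⟨k, hk0⟩
    have hB := hω1 0
    have hC := hω1 k
    have hBs : Tendsto (fun d : ℕ =>
        Real.sqrt ((∑ i ∈ range d, (X 0 i ω) ^ 2) / (d : ℝ))) atTop (𝓝 1) := by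
      have h := (Real.continuous_sqrt.tendsto 1).comp hB
      rw [Real.sqrt_one] at h
      exact h
    have hCs : Tendsto (fun d : ℕ =>
        Real.sqrt ((∑ i ∈ range d, (X k i ω) ^ 2) / (d : ℝ))) atTop (𝓝 1) := by
      have h := (Real.continuous_sqrt.tendsto 1).comp hC
      rw [Real.sqrt_one] at h
      exact h
    have hden : Tendsto (fun d : ℕ =>
        Real.sqrt ((∑ i ∈ range d, (X 0 i ω) ^ 2) / (d : ℝ)) *
          Real.sqrt ((∑ i ∈ range d, (X k i ω) ^ 2) / (d : ℝ))) atTop (𝓝 1) := by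
      have h := hBs.mul hCs
      rw [mul_one] at h
      exact h
    have hquot : Tendsto (fun d : ℕ =>
        ((∑ i ∈ range d, X 0 i ω * X k i ω) / (d : ℝ)) /
          (Real.sqrt ((∑ i ∈ range d, (X 0 i ω) ^ 2) / (d : ℝ)) *
            Real.sqrt ((∑ i ∈ range d, (X k i ω) ^ 2) / (d : ℝ)))) atTop (𝓝 0) := by
      have h := hA.div hden one_ne_zero
      rw [zero_div] at h
      exact h
    have heq : (fun d : ℕ =>
        ((∑ i ∈ range d, X 0 i ω * X k i ω) / (d : ℝ)) /
          (Real.sqrt ((∑ i ∈ range d, (X 0 i ω) ^ 2) / (d : ℝ)) *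
            Real.sqrt ((∑ i ∈ range d, (X k i ω) ^ 2) / (d : ℝ)))) =ᶠ[atTop]
        fun d : ℕ => cosSim (zvec (X 0) d ω) (zvec (X k) d ω) := by
      filter_upwards [eventually_ge_atTop 1] with d hd
      have hd0 : (0 : ℝ) < (d : ℝ) := by exact_mod_cast hd
      rw [cosSim_zvec]
      set A := ∑ i ∈ range d, X 0 i ω * X k i ω
      set B := ∑ i ∈ range d, (X 0 i ω) ^ 2
      set C := ∑ i ∈ range d, (X k i ω) ^ 2
      have hB0 : 0 ≤ B := Finset.sum_nonneg fun i _ => sq_nonneg _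
      have hC0 : 0 ≤ C := Finset.sum_nonneg fun i _ => sq_nonneg _
      rw [Real.sqrt_div hB0, Real.sqrt_div hC0]
      rw [div_mul_div_comm, Real.mul_self_sqrt hd0.le]
      rw [div_div_div_comm, div_self hd0.ne', div_one]
    have hcos : Tendsto (fun d : ℕ => cosSim (zvec (X 0) d ω) (zvec (X k) d ω))
        atTop (𝓝 0) := hquot.congr' heq
    have := (Real.continuous_exp.tendsto 0).comp hcos
    simpa [Real.exp_zero, Function.comp_def] using this
  -- conclude
  refine tendstoInMeasure_of_tendsto_ae (fun d => ?_) hae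
  refine (Finset.measurable_sum _ fun k _ => ?_).aestronglyMeasurable
  have : (fun ω => cosSim (zvec (X 0) d ω) (zvec (X k) d ω)) =
      fun ω => (∑ i ∈ range d, X 0 i ω * X k i ω) /
        (Real.sqrt (∑ i ∈ range d, (X 0 i ω) ^ 2) *
          Real.sqrt (∑ i ∈ range d, (X k i ω) ^ 2)) := by
    funext ω; exact cosSim_zvec _ _ _ _
  refine Real.measurable_exp.comp ?_
  rw [this]
  have hm1 : Measurable fun ω => ∑ i ∈ range d, X 0 i ω * X k i ω :=
    Finset.measurable_sum _ fun i _ => (hmeas 0 i).mul (hmeas k i)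
  have hm2 : Measurable fun ω => Real.sqrt (∑ i ∈ range d, (X 0 i ω) ^ 2) :=
    Real.continuous_sqrt.measurable.comp (Finset.measurable_sum _ fun i _ => (hmeas 0 i).pow_const 2)
  have hm3 : Measurable fun ω => Real.sqrt (∑ i ∈ range d, (X k i ω) ^ 2) :=
    Real.continuous_sqrt.measurable.comp (Finset.measurable_sum _ fun i _ => (hmeas k i).pow_const 2)
  exact hm1.div (hm2.mul hm3)
end

section
/- Let b ≥ 1 and let {X_{k,i} : k ∈ {0, 1, …, b}, i ∈ ℕ} be a jointly independent family of identically distributed real-valued random variables with E = 0 and second moment 1, and set z_k^{(d)} = (X_{k,0}, …, X_{k,d−1}) ∈ ℝ^d. Define the ideal contrastive loss term L_d = exp(S(z_0^{(d)}, z_0^{(d)})) / (exp(S(z_0^{(d)}, z_0^{(d)})) + Σ_{k=1}^{b} exp(S(z_0^{(d)}, z_k^{(d)}))), where S is cosine similarity with the zero-division convention. Then L_d converges to e/(e + b) in probability as d → ∞. -/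
open MeasureTheory ProbabilityTheory Filter Finset
open scoped Topology

lemma zvec_norm {Ω : Type*} (X : ℕ → Ω → ℝ) (d : ℕ) (ω : Ω) :
    ‖zvec X d ω‖ = Real.sqrt (∑ i ∈ Finset.range d, X i ω ^ 2) := by
  rw [EuclideanSpace.norm_eq, ← Fin.sum_univ_eq_sum_range (fun i => X i ω ^ 2)]
  congr 1
  refine Finset.sum_congr rfl fun i _ => ?_
  simp [zvec, Real.norm_eq_abs, sq_abs]

lemma zvec_inner {Ω : Type*} (X Y : ℕ → Ω → ℝ) (d : ℕ) (ω : Ω) :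
    (inner ℝ (zvec X d ω) (zvec Y d ω) : ℝ) = ∑ i ∈ Finset.range d, X i ω * Y i ω := by
  rw [← Fin.sum_univ_eq_sum_range (fun i => X i ω * Y i ω)]
  simp [zvec, PiLp.inner_apply, RCLike.inner_apply, conj_trivial, mul_comm]

lemma identDistrib_prodMk {Ω : Type*} {mΩ : MeasurableSpace Ω} {μ : Measure Ω}
    [IsProbabilityMeasure μ] {f g f' g' : Ω → ℝ}
    (hfg : IndepFun f g μ) (hfg' : IndepFun f' g' μ)
    (hf : IdentDistrib f f' μ μ) (hg : IdentDistrib g g' μ μ) :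
    IdentDistrib (fun ω => (f ω, g ω)) (fun ω => (f' ω, g' ω)) μ μ := by
  refine ⟨hf.aemeasurable_fst.prodMk hg.aemeasurable_fst,
    hf.aemeasurable_snd.prodMk hg.aemeasurable_snd, ?_⟩
  rw [(indepFun_iff_map_prod_eq_prod_map_map hf.aemeasurable_fst hg.aemeasurable_fst).mp hfg,
    (indepFun_iff_map_prod_eq_prod_map_map hf.aemeasurable_snd hg.aemeasurable_snd).mp hfg',
    hf.map_eq, hg.map_eq]

/-- **Limit of the ideal contrastive loss term.**
Let `b ≥ 1` and let `{X k i : k ∈ {0,…,b}, i ∈ ℕ}` be a jointly independent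
family of identically distributed real random variables with mean `0` and
second moment `1`.  With `z_k⁽ᵈ⁾ = (X k 0, …, X k (d-1)) ∈ ℝᵈ`, the ideal
contrastive loss term
`L_d = exp(S(z₀,z₀)) / (exp(S(z₀,z₀)) + ∑_{k=1}^b exp(S(z₀,z_k)))`
converges to `e / (e + b)` in probability as `d → ∞`. -/
theorem ideal_contrastive_loss_tendsto_inProbability
    {Ω : Type*} {mΩ : MeasurableSpace Ω} (μ : Measure Ω) [IsProbabilityMeasure μ]
    (b : ℕ) (hb : 1 ≤ b)
    (X : Fin (b + 1) → ℕ → Ω → ℝ)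
    (hmeas : ∀ k i, Measurable (X k i))
    (hindep : iIndepFun (fun p : Fin (b + 1) × ℕ => X p.1 p.2) μ)
    (hident : ∀ k i, IdentDistrib (X k i) (X 0 0) μ μ)
    (hint : Integrable (fun ω => (X 0 0 ω) ^ 2) μ)
    (hmean : ∫ ω, X 0 0 ω ∂μ = 0)
    (hsecond : ∫ ω, (X 0 0 ω) ^ 2 ∂μ = 1) :
    TendstoInMeasure μ
      (fun (d : ℕ) ω =>
        Real.exp (cosSim (zvec (X 0) d ω) (zvec (X 0) d ω)) /
          (Real.exp (cosSim (zvec (X 0) d ω) (zvec (X 0) d ω)) +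
            ∑ k ∈ Finset.Ioi (0 : Fin (b + 1)),
              Real.exp (cosSim (zvec (X 0) d ω) (zvec (X k) d ω))))
      atTop (fun _ => Real.exp 1 / (Real.exp 1 + b)) := by
  classical
  have msq_meas : Measurable fun x : ℝ => x ^ 2 := measurable_id.pow_const 2
  have hmul_meas : Measurable fun p : ℝ × ℝ => p.1 * p.2 := measurable_fst.mul measurable_snd
  have hL2 : ∀ k i, MemLp (X k i) 2 μ := fun k i =>
    (hident k i).symm.memLp_snd
      ((memLp_two_iff_integrable_sq (hmeas 0 0).aestronglyMeasurable).2 hint)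
  have hInt1 : ∀ k i, Integrable (X k i) μ := fun k i => (hL2 k i).integrable one_le_two
  have hIntSq : ∀ k i, Integrable (fun ω => X k i ω ^ 2) μ := fun k i =>
    ((hident k i).comp msq_meas).symm.integrable_snd hint
  -- strong law for the squares
  have hSq : ∀ k : Fin (b + 1), ∀ᵐ ω ∂μ,
      Tendsto (fun d : ℕ => (d : ℝ)⁻¹ * ∑ i ∈ Finset.range d, X k i ω ^ 2) atTop (𝓝 1) := by
    intro k
    have h := strong_law_ae (μ := μ) (fun i ω => X k i ω ^ 2)
      (hIntSq k 0)
      (fun i j hij =>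
        (hindep.indepFun (show ((k, i) : Fin (b + 1) × ℕ) ≠ (k, j) from
          fun h => hij (congrArg Prod.snd h))).comp msq_meas msq_meas)
      (fun i => ((hident k i).trans (hident k 0).symm).comp msq_meas)
    have hE : ∫ ω, X k 0 ω ^ 2 ∂μ = 1 := by
      have h' := ((hident k 0).comp msq_meas).integral_eq
      simp only [Function.comp_def] at h'
      rw [h']; exact hsecond
    filter_upwards [h] with ω hω
    rw [hE] at hω
    simpa [smul_eq_mul] using hω
  -- strong law for the products
  have hPr : ∀ k : Fin (b + 1), k ≠ 0 → ∀ᵐ ω ∂μ,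
      Tendsto (fun d : ℕ => (d : ℝ)⁻¹ * ∑ i ∈ Finset.range d, X 0 i ω * X k i ω)
        atTop (𝓝 0) := by
    intro k hk
    have hpair : ∀ i : ℕ, IndepFun (X 0 i) (X k i) μ := fun i =>
      hindep.indepFun (show ((0, i) : Fin (b + 1) × ℕ) ≠ (k, i) from
        fun h => (Ne.symm hk) (congrArg Prod.fst h))
    have hpairident : ∀ i : ℕ,
        IdentDistrib (fun ω => (X 0 i ω, X k i ω)) (fun ω => (X 0 0 ω, X k 0 ω)) μ μ :=
      fun i => identDistrib_prodMk (hpair i) (hpair 0)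
        ((hident 0 i).trans (hident 0 0).symm) ((hident k i).trans (hident k 0).symm)
    have h := strong_law_ae (μ := μ) (fun i ω => X 0 i ω * X k i ω)
      ((hpair 0).integrable_mul (hInt1 0 0) (hInt1 k 0))
      (fun i j hij => by
        have h1 : IndepFun (fun ω => (X 0 i ω, X k i ω)) (fun ω => (X 0 j ω, X k j ω)) μ :=
          hindep.indepFun_prodMk_prodMk (fun p => hmeas p.1 p.2) (0, i) (k, i) (0, j) (k, j)
            (fun h => hij (congrArg Prod.snd h))
            (fun h => (Ne.symm hk) (congrArg Prod.fst h))
            (fun h => hk (congrArg Prod.fst h))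
            (fun h => hij (congrArg Prod.snd h))
        exact h1.comp hmul_meas hmul_meas)
      (fun i => (hpairident i).comp hmul_meas)
    have hE : ∫ ω, X 0 0 ω * X k 0 ω ∂μ = 0 := by
      have := (hpair 0).integral_mul_eq_mul_integral (hInt1 0 0).aestronglyMeasurable (hInt1 k 0).aestronglyMeasurable
      have hk0 : ∫ ω, X k 0 ω ∂μ = 0 := by rw [(hident k 0).integral_eq]; exact hmean
      calc ∫ ω, X 0 0 ω * X k 0 ω ∂μ = (∫ ω, X 0 0 ω ∂μ) * ∫ ω, X k 0 ω ∂μ := this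
        _ = 0 := by rw [hmean, hk0, mul_zero]
    filter_upwards [h] with ω hω
    rw [hE] at hω
    simpa [smul_eq_mul] using hω
  -- almost-everywhere pointwise convergence of the loss
  have hAE : ∀ᵐ ω ∂μ,
      Tendsto (fun d : ℕ =>
        Real.exp (cosSim (zvec (X 0) d ω) (zvec (X 0) d ω)) /
          (Real.exp (cosSim (zvec (X 0) d ω) (zvec (X 0) d ω)) +
            ∑ k ∈ Finset.Ioi (0 : Fin (b + 1)),
              Real.exp (cosSim (zvec (X 0) d ω) (zvec (X k) d ω))))
        atTop (𝓝 (Real.exp 1 / (Real.exp 1 + b))) := by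
    have h1 : ∀ᵐ ω ∂μ, ∀ k : Fin (b + 1),
        Tendsto (fun d : ℕ => (d : ℝ)⁻¹ * ∑ i ∈ Finset.range d, X k i ω ^ 2) atTop (𝓝 1) :=
      ae_all_iff.2 hSq
    have h2 : ∀ᵐ ω ∂μ, ∀ k : Fin (b + 1), k ≠ 0 →
        Tendsto (fun d : ℕ => (d : ℝ)⁻¹ * ∑ i ∈ Finset.range d, X 0 i ω * X k i ω)
          atTop (𝓝 0) := by
      rw [ae_all_iff]
      intro k
      by_cases hk : k = 0
      · exact Eventually.of_forall fun ω h => absurd hk h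
      · filter_upwards [hPr k hk] with ω hω _ using hω
    filter_upwards [h1, h2] with ω hω1 hω2
    -- cross similarities tend to 0
    have hcos : ∀ k : Fin (b + 1), k ≠ 0 →
        Tendsto (fun d : ℕ => cosSim (zvec (X 0) d ω) (zvec (X k) d ω)) atTop (𝓝 0) := by
      intro k hk
      have hden : Tendsto (fun d : ℕ =>
          Real.sqrt ((d : ℝ)⁻¹ * ∑ i ∈ Finset.range d, X 0 i ω ^ 2) *
            Real.sqrt ((d : ℝ)⁻¹ * ∑ i ∈ Finset.range d, X k i ω ^ 2)) atTop (𝓝 1) := by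
        simpa using (hω1 0).sqrt.mul (hω1 k).sqrt
      have hlim : Tendsto (fun d : ℕ =>
          ((d : ℝ)⁻¹ * ∑ i ∈ Finset.range d, X 0 i ω * X k i ω) /
            (Real.sqrt ((d : ℝ)⁻¹ * ∑ i ∈ Finset.range d, X 0 i ω ^ 2) *
              Real.sqrt ((d : ℝ)⁻¹ * ∑ i ∈ Finset.range d, X k i ω ^ 2))) atTop (𝓝 0) := by
        simpa using (show Tendsto (fun d : ℕ =>
            ((d : ℝ)⁻¹ * ∑ i ∈ Finset.range d, X 0 i ω * X k i ω) /
              (Real.sqrt ((d : ℝ)⁻¹ * ∑ i ∈ Finset.range d, X 0 i ω ^ 2) *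
                Real.sqrt ((d : ℝ)⁻¹ * ∑ i ∈ Finset.range d, X k i ω ^ 2))) atTop (𝓝 (0 / 1)) from
            (hω2 k hk).div hden one_ne_zero)
      refine Tendsto.congr' ?_ hlim
      filter_upwards [eventually_gt_atTop 0] with d hd
      have hd0 : (0 : ℝ) < (d : ℝ)⁻¹ := by positivity
      rw [cosSim, zvec_inner, zvec_norm, zvec_norm,
        Real.sqrt_mul hd0.le (∑ i ∈ Finset.range d, X 0 i ω ^ 2),
        Real.sqrt_mul hd0.le (∑ i ∈ Finset.range d, X k i ω ^ 2),
        show (Real.sqrt (d : ℝ)⁻¹ * Real.sqrt (∑ i ∈ Finset.range d, X 0 i ω ^ 2)) *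
            (Real.sqrt (d : ℝ)⁻¹ * Real.sqrt (∑ i ∈ Finset.range d, X k i ω ^ 2)) =
            (Real.sqrt (d : ℝ)⁻¹ * Real.sqrt (d : ℝ)⁻¹) *
              (Real.sqrt (∑ i ∈ Finset.range d, X 0 i ω ^ 2) *
                Real.sqrt (∑ i ∈ Finset.range d, X k i ω ^ 2)) from by ring,
        Real.mul_self_sqrt hd0.le, mul_div_mul_left _ _ (ne_of_gt hd0)]
    -- the anchor self-similarity is eventually 1
    have hcos00 : ∀ᶠ d : ℕ in atTop,
        cosSim (zvec (X 0) d ω) (zvec (X 0) d ω) = 1 := by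
      filter_upwards [(hω1 0).eventually (lt_mem_nhds (show (0 : ℝ) < 1 by norm_num))] with d hd
      have hS : 0 < ∑ i ∈ Finset.range d, X 0 i ω ^ 2 := by
        rcases lt_or_eq_of_le
            (Finset.sum_nonneg fun i _ => sq_nonneg (X 0 i ω)) with h | h
        · exact h
        · exfalso; rw [← h, mul_zero] at hd; exact lt_irrefl 0 hd
      have hnorm : ‖zvec (X 0) d ω‖ ≠ 0 := by
        rw [zvec_norm]; exact (Real.sqrt_pos.2 hS).ne'
      rw [cosSim, real_inner_self_eq_norm_mul_norm, div_self (mul_ne_zero hnorm hnorm)]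
    -- conclude
    have hsum : Tendsto (fun d : ℕ =>
        ∑ k ∈ Finset.Ioi (0 : Fin (b + 1)),
          Real.exp (cosSim (zvec (X 0) d ω) (zvec (X k) d ω))) atTop (𝓝 (b : ℝ)) := by
      have h := tendsto_finset_sum (Finset.Ioi (0 : Fin (b + 1)))
        (fun k hk => ((Real.continuous_exp.tendsto 0).comp (hcos k (Finset.mem_Ioi.mp hk).ne') :
          Tendsto (fun d : ℕ => Real.exp (cosSim (zvec (X 0) d ω) (zvec (X k) d ω)))
            atTop (𝓝 (Real.exp 0))))
      have hcard : ∑ _k ∈ Finset.Ioi (0 : Fin (b + 1)), Real.exp 0 = (b : ℝ) := by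
        simp [Real.exp_zero, Fin.card_Ioi]
      rwa [hcard] at h
    have hfinal : Tendsto (fun d : ℕ =>
        Real.exp 1 / (Real.exp 1 +
          ∑ k ∈ Finset.Ioi (0 : Fin (b + 1)),
            Real.exp (cosSim (zvec (X 0) d ω) (zvec (X k) d ω))))
        atTop (𝓝 (Real.exp 1 / (Real.exp 1 + b))) := by
      refine Tendsto.div tendsto_const_nhds (tendsto_const_nhds.add hsum) ?_
      positivity
    refine Tendsto.congr' ?_ hfinal
    filter_upwards [hcos00] with d hd
    rw [hd]
  -- measurability of each loss term
  have hmeasL : ∀ d : ℕ, AEStronglyMeasurable (fun ω =>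
      Real.exp (cosSim (zvec (X 0) d ω) (zvec (X 0) d ω)) /
        (Real.exp (cosSim (zvec (X 0) d ω) (zvec (X 0) d ω)) +
          ∑ k ∈ Finset.Ioi (0 : Fin (b + 1)),
            Real.exp (cosSim (zvec (X 0) d ω) (zvec (X k) d ω)))) μ := by
    intro d
    have hz : ∀ k : Fin (b + 1), Measurable fun ω => zvec (X k) d ω := fun k =>
      (MeasurableEquiv.toLp 2 (Fin d → ℝ)).measurable.comp (measurable_pi_lambda _ fun i => hmeas k i)
    have hcosm : ∀ k : Fin (b + 1),
        Measurable fun ω => cosSim (zvec (X 0) d ω) (zvec (X k) d ω) := fun k =>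
      ((hz 0).inner (hz k)).div ((hz 0).norm.mul ((hz k).norm))
    exact (((hcosm 0).exp).div (((hcosm 0).exp).add
      (Finset.measurable_sum _ fun k _ => (hcosm k).exp))).aestronglyMeasurable
  exact tendstoInMeasure_of_tendsto_ae hmeasL hAE
end
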